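/- Let F : (ℝⁿ∖C) × closure(𝕌) → ℝⁿ be continuous, where 𝕌 = {(w₀,w) ∈ (0,∞)×U : w₀+|w|=1} and closure(𝕌) is compact. Let W be a control Lyapunov function for y' = F(y,w₀,w) with decrease rate γ, and suppose the graph set Γ_r = {(x,p) : x ∈ W⁻¹([min(r,1), max(r,1)]), p ∈ ∂_L W(x)} is nonempty and compact for each r > 0 (which follows from W being locally Lipschitz, proper, and the upper semicontinuity with local boundedness of x ↝ ∂_L W(x)). Then there exists a continuous function N : (0,∞) → (0,1], increasing on (0,1] and decreasing on [1,∞), such that for every x ∉ C, inf { ⟨p, F(x,w₀,w)⟩ : (w₀,w) ∈ 𝕌, w₀ ≥ N(W(x)) } < -γ(W(x)) for all p ∈ ∂_L W(x). -/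

import Mathlib

open Set Filter Metric
open scoped RealInnerProductSpace


noncomputable def Mfun (g : ℝ → ℝ) : ℝ → ℝ :=
  fun r => sInf ((fun s => g s + max (r - s) 0) '' Set.Ioi (0:ℝ))

lemma Mfun_bdd (g : ℝ → ℝ) (hg0 : ∀ s, 0 ≤ g s) (r : ℝ) :
    BddBelow ((fun s => g s + max (r - s) 0) '' Set.Ioi (0:ℝ)) := by
  refine ⟨0, ?_⟩
  rintro y ⟨s, _, rfl⟩
  exact add_nonneg (hg0 s) (le_max_right _ _)

lemma Mfun_ne (g : ℝ → ℝ) (r : ℝ) :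
    ((fun s => g s + max (r - s) 0) '' Set.Ioi (0:ℝ)).Nonempty :=
  ⟨_, ⟨1, by norm_num, rfl⟩⟩

lemma Mfun_le (g : ℝ → ℝ) (hg0 : ∀ s, 0 ≤ g s) {r : ℝ} (hr : 0 < r) : Mfun g r ≤ g r := by
  have := csInf_le (Mfun_bdd g hg0 r) (Set.mem_image_of_mem _ (show r ∈ Set.Ioi 0 from hr))
  simpa [Mfun] using this

lemma Mfun_pos (g : ℝ → ℝ) (hg0 : ∀ s, 0 ≤ g s) (hg : Monotone g) {r : ℝ}
    (hr : 0 < r) (hgp : 0 < g (r/2)) : 0 < Mfun g r := by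
  have h : min (g (r/2)) (r/2) ≤ Mfun g r := by
    apply le_csInf (Mfun_ne g r)
    rintro y ⟨s, hs, rfl⟩
    rcases le_or_gt (r/2) s with h | h
    · exact le_trans (min_le_left _ _) (le_trans (hg h) (le_add_of_nonneg_right (le_max_right _ _)))
    · refine le_trans (min_le_right _ _) ?_
      have : r/2 ≤ max (r - s) 0 := le_max_of_le_left (by linarith)
      linarith [hg0 s]
  exact lt_of_lt_of_le (lt_min hgp (by linarith)) h

lemma Mfun_mono (g : ℝ → ℝ) (hg0 : ∀ s, 0 ≤ g s) : Monotone (Mfun g) := by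
  intro r r' h
  apply le_csInf (Mfun_ne g r')
  rintro y ⟨s, hs, rfl⟩
  refine le_trans (csInf_le (Mfun_bdd g hg0 r) (Set.mem_image_of_mem _ hs)) ?_
  show g s + max (r - s) 0 ≤ g s + max (r' - s) 0
  have : max (r - s) 0 ≤ max (r' - s) 0 := max_le_max (by linarith) le_rfl
  linarith

lemma Mfun_sub_le (g : ℝ → ℝ) (hg0 : ∀ s, 0 ≤ g s) (r r' : ℝ) :
    Mfun g r ≤ Mfun g r' + |r - r'| := by
  rw [← sub_le_iff_le_add]
  apply le_csInf (Mfun_ne g r')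
  rintro y ⟨s, hs, rfl⟩
  rw [sub_le_iff_le_add]
  refine le_trans (csInf_le (Mfun_bdd g hg0 r) (Set.mem_image_of_mem _ hs)) ?_
  show g s + max (r - s) 0 ≤ g s + max (r' - s) 0 + |r - r'|
  have : max (r - s) 0 ≤ max (r' - s) 0 + |r - r'| := by
    apply max_le
    · have : r - s = (r' - s) + (r - r') := by ring
      rw [this]
      exact add_le_add (le_max_left _ _) (le_abs_self _)
    · positivity
  linarith

lemma Mfun_lip (g : ℝ → ℝ) (hg0 : ∀ s, 0 ≤ g s) : LipschitzWith 1 (Mfun g) := by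
  apply LipschitzWith.of_dist_le_mul
  intro x y
  rw [Real.dist_eq, Real.dist_eq, NNReal.coe_one, one_mul, abs_sub_le_iff]
  constructor
  · linarith [Mfun_sub_le g hg0 x y, le_abs_self (x - y)]
  · have := Mfun_sub_le g hg0 y x
    rw [abs_sub_comm] at this
    linarith

/-- The proximal subdifferential of `W` at `x`. -/
def proxSubdiff {n : ℕ} (W : EuclideanSpace ℝ (Fin n) → ℝ) (x : EuclideanSpace ℝ (Fin n)) :
    Set (EuclideanSpace ℝ (Fin n)) :=
  {p | ∃ σ > (0:ℝ), ∃ η > (0:ℝ), ∀ y, ‖y - x‖ ≤ η →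
    ⟪p, y - x⟫ ≤ W y - W x + σ * ‖y - x‖ ^ 2}

/-- The limiting (Mordukhovich) subdifferential of `W` at `x`. -/
def limSubdiff {n : ℕ} (W : EuclideanSpace ℝ (Fin n) → ℝ) (x : EuclideanSpace ℝ (Fin n)) :
    Set (EuclideanSpace ℝ (Fin n)) :=
  {p | ∃ xs ps : ℕ → EuclideanSpace ℝ (Fin n),
    (∀ i, ps i ∈ proxSubdiff W (xs i)) ∧
    Tendsto xs atTop (nhds x) ∧ Tendsto ps atTop (nhds p)}

theorem stmt_8 {n m : ℕ}
    (U : Set (EuclideanSpace ℝ (Fin m))) (hUcl : IsClosed U)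
    (hUcone : ∀ c : ℝ, 0 ≤ c → ∀ v ∈ U, c • v ∈ U)
    (C : Set (EuclideanSpace ℝ (Fin n))) (hC : IsClosed C)
    (𝕌 : Set (ℝ × EuclideanSpace ℝ (Fin m)))
    (h𝕌 : 𝕌 = {q : ℝ × EuclideanSpace ℝ (Fin m) | 0 < q.1 ∧ q.2 ∈ U ∧ q.1 + ‖q.2‖ = 1})
    (h𝕌cpt : IsCompact (closure 𝕌))
    (FF : EuclideanSpace ℝ (Fin n) → ℝ × EuclideanSpace ℝ (Fin m) → EuclideanSpace ℝ (Fin n))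
    (hFFc : ContinuousOn
      (fun q : EuclideanSpace ℝ (Fin n) × ℝ × EuclideanSpace ℝ (Fin m) => FF q.1 q.2)
      (Cᶜ ×ˢ closure 𝕌))
    (W : EuclideanSpace ℝ (Fin n) → ℝ) (γ : ℝ → ℝ)
    -- `W` is a CLF for the extended system with decrease rate `γ`
    (hWlip : ∀ K ⊆ closure Cᶜ, IsCompact K → ∃ L : NNReal, LipschitzOnWith L W K)
    (hWpos : ∀ x ∉ C, 0 < W x) (hWzero : ∀ x ∈ frontier C, W x = 0) (hWnn : ∀ x, 0 ≤ W x)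
    (hWproper : ∀ K : Set ℝ, IsCompact K → IsCompact (Cᶜ ∩ W ⁻¹' K))
    (hγc : ContinuousOn γ (Set.Ioi 0)) (hγmono : StrictMonoOn γ (Set.Ioi 0))
    (hγpos : ∀ r > (0:ℝ), 0 < γ r)
    (hdecr : ∀ x ∉ C, ∀ p ∈ limSubdiff W x, ∃ q ∈ 𝕌, ⟪p, FF x q⟫ < -γ (W x))
    -- the graph sets Γ_r are nonempty and compact
    (hΓ : ∀ r > (0:ℝ),
      ({q : EuclideanSpace ℝ (Fin n) × EuclideanSpace ℝ (Fin n) |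
        q.1 ∉ C ∧ W q.1 ∈ Set.Icc (min r 1) (max r 1) ∧
        q.2 ∈ limSubdiff W q.1}).Nonempty ∧
      IsCompact {q : EuclideanSpace ℝ (Fin n) × EuclideanSpace ℝ (Fin n) |
        q.1 ∉ C ∧ W q.1 ∈ Set.Icc (min r 1) (max r 1) ∧ q.2 ∈ limSubdiff W q.1}) :
    ∃ N : ℝ → ℝ, ContinuousOn N (Set.Ioi 0) ∧ (∀ r > (0:ℝ), N r ∈ Set.Ioc (0:ℝ) 1) ∧
      MonotoneOn N (Set.Ioc 0 1) ∧ AntitoneOn N (Set.Ici 1) ∧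
      ∀ x ∉ C, ∀ p ∈ limSubdiff W x,
        ∃ q ∈ 𝕌, N (W x) ≤ q.1 ∧ ⟪p, FF x q⟫ < -γ (W x) := by
  classical
  -- basic facts about 𝕌
  have h𝕌pos : ∀ q ∈ 𝕌, 0 < q.1 := by intro q hq; rw [h𝕌] at hq; exact hq.1
  have h𝕌le : ∀ q ∈ 𝕌, q.1 ≤ 1 := by
    intro q hq; rw [h𝕌] at hq
    have := norm_nonneg q.2
    linarith [hq.2.2]
  -- continuity of W off C
  have hWcont : ∀ x ∉ C, ContinuousAt W x := by
    intro x hx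
    have hxo : Cᶜ ∈ nhds x := hC.isOpen_compl.mem_nhds hx
    obtain ⟨ε, hε, hball⟩ := Metric.nhds_basis_closedBall.mem_iff.mp hxo
    obtain ⟨L, hL⟩ := hWlip (Metric.closedBall x ε) (hball.trans subset_closure)
      (isCompact_closedBall x ε)
    exact hL.continuousOn.continuousAt (Metric.closedBall_mem_nhds x hε)
  -- continuity of y ↦ FF y q off C
  have hFq : ∀ q ∈ closure 𝕌, ∀ x ∉ C, ContinuousAt (fun y => FF y q) x := by
    intro q hq x hx
    have hmap : Set.MapsTo (fun y : EuclideanSpace ℝ (Fin n) => (y, q)) Cᶜ (Cᶜ ×ˢ closure 𝕌) :=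
      fun y hy => ⟨hy, hq⟩
    have hcc : ContinuousOn (fun y : EuclideanSpace ℝ (Fin n) => FF y q) Cᶜ :=
      hFFc.comp (Continuous.continuousOn (continuous_id.prodMk continuous_const)) hmap
    exact hcc.continuousAt (hC.isOpen_compl.mem_nhds hx)
  set S : ℝ → Set ℝ := fun r => {c | 0 < c ∧ ∀ x, x ∉ C →
      W x ∈ Set.Icc (min r 1) (max r 1) → ∀ p ∈ limSubdiff W x,
      ∃ q ∈ 𝕌, c ≤ q.1 ∧ ⟪p, FF x q⟫ < -γ (W x)} with hSdef
  -- the compactness argument: S r is nonempty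
  have hSne : ∀ r > (0:ℝ), (S r).Nonempty := by
    intro r hr
    obtain ⟨hΓne, hΓcpt⟩ := hΓ r hr
    set Γ : Set (EuclideanSpace ℝ (Fin n) × EuclideanSpace ℝ (Fin n)) :=
      {q | q.1 ∉ C ∧ W q.1 ∈ Set.Icc (min r 1) (max r 1) ∧ q.2 ∈ limSubdiff W q.1} with hΓdef
    have hsel : ∀ z ∈ Γ, ∃ q ∈ 𝕌,
        ∃ V : Set (EuclideanSpace ℝ (Fin n) × EuclideanSpace ℝ (Fin n)), V ∈ nhds z ∧
        ∀ v ∈ V, ⟪v.2, FF v.1 q⟫ < -γ (W v.1) := by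
      rintro z ⟨hz1, hz2, hz3⟩
      obtain ⟨q, hq𝕌, hqlt⟩ := hdecr z.1 hz1 z.2 hz3
      have hcont : ContinuousAt
          (fun v : EuclideanSpace ℝ (Fin n) × EuclideanSpace ℝ (Fin n) =>
            ⟪v.2, FF v.1 q⟫ + γ (W v.1)) z := by
        have h1 : ContinuousAt
            (fun v : EuclideanSpace ℝ (Fin n) × EuclideanSpace ℝ (Fin n) => FF v.1 q) z :=
          (hFq q (subset_closure hq𝕌) z.1 hz1).comp continuousAt_fst
        have h2 : ContinuousAt
            (fun v : EuclideanSpace ℝ (Fin n) × EuclideanSpace ℝ (Fin n) => v.2) z :=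
          continuousAt_snd
        have h3 : ContinuousAt
            (fun v : EuclideanSpace ℝ (Fin n) × EuclideanSpace ℝ (Fin n) => γ (W v.1)) z := by
          have hW : ContinuousAt W z.1 := hWcont z.1 hz1
          have hγ' : ContinuousAt γ (W z.1) :=
            hγc.continuousAt (Ioi_mem_nhds (hWpos z.1 hz1))
          exact Filter.Tendsto.comp hγ' (Filter.Tendsto.comp hW continuousAt_fst)
        exact (h2.inner h1).add h3
      have hval : ⟪z.2, FF z.1 q⟫ + γ (W z.1) < 0 := by linarith
      have hev : {v : EuclideanSpace ℝ (Fin n) × EuclideanSpace ℝ (Fin n) |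
          ⟪v.2, FF v.1 q⟫ + γ (W v.1) < 0} ∈ nhds z := hcont (Iio_mem_nhds hval)
      refine ⟨q, hq𝕌, _, hev, ?_⟩
      intro v hv
      have : ⟪v.2, FF v.1 q⟫ + γ (W v.1) < 0 := hv
      linarith
    choose! qf hqf Vf hVf hVf2 using hsel
    obtain ⟨t, htΓ, hcover⟩ := hΓcpt.elim_nhds_subcover Vf (fun z hz => hVf z hz)
    have htne : t.Nonempty := by
      obtain ⟨z0, hz0⟩ := hΓne
      have hz0' := hcover hz0
      simp only [Set.mem_iUnion] at hz0'
      obtain ⟨z, hz, _⟩ := hz0'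
      exact ⟨z, hz⟩
    refine ⟨t.inf' htne (fun z => (qf z).1), ?_, ?_⟩
    · rw [Finset.lt_inf'_iff]
      intro z hz
      exact h𝕌pos _ (hqf z (htΓ z hz))
    · intro x hx hWx p hp
      have hmem : (x, p) ∈ Γ := ⟨hx, hWx, hp⟩
      have hm := hcover hmem
      simp only [Set.mem_iUnion] at hm
      obtain ⟨z, hzt, hzV⟩ := hm
      refine ⟨qf z, hqf z (htΓ z hzt), Finset.inf'_le _ hzt, ?_⟩
      exact hVf2 z (htΓ z hzt) (x, p) hzV
  -- S r is bounded above by 1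
  have hSle1 : ∀ r > (0:ℝ), ∀ c ∈ S r, c ≤ 1 := by
    intro r hr c hc
    obtain ⟨z0, hz01, hz02, hz03⟩ := (hΓ r hr).1
    obtain ⟨q, hq𝕌, hcq, -⟩ := hc.2 z0.1 hz01 hz02 z0.2 hz03
    exact hcq.trans (h𝕌le q hq𝕌)
  have hSbdd : ∀ r > (0:ℝ), BddAbove (S r) := fun r hr => ⟨1, fun c hc => hSle1 r hr c hc⟩
  set ρ : ℝ → ℝ := fun r => sSup (S r) with hρdef
  have hρpos : ∀ r > (0:ℝ), 0 < ρ r := by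
    intro r hr
    obtain ⟨c, hc⟩ := hSne r hr
    exact lt_of_lt_of_le hc.1 (le_csSup (hSbdd r hr) hc)
  have hρle1 : ∀ r > (0:ℝ), ρ r ≤ 1 := fun r hr =>
    csSup_le (hSne r hr) (fun c hc => hSle1 r hr c hc)
  have hband : ∀ r r' : ℝ, 0 < r → ((r ≤ r' ∧ r' ≤ 1) ∨ (1 ≤ r' ∧ r' ≤ r)) →
      Set.Icc (min r' 1) (max r' 1) ⊆ Set.Icc (min r 1) (max r 1) := by
    intro r r' hr h
    apply Set.Icc_subset_Icc
    · rcases h with ⟨h1, h2⟩ | ⟨h1, h2⟩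
      · exact min_le_min h1 le_rfl
      · calc min r 1 ≤ 1 := min_le_right _ _
          _ = min r' 1 := (min_eq_right h1).symm
    · rcases h with ⟨h1, h2⟩ | ⟨h1, h2⟩
      · calc max r' 1 = 1 := max_eq_right h2
          _ ≤ max r 1 := le_max_right _ _
      · calc max r' 1 = r' := max_eq_left h1
          _ ≤ r := h2
          _ ≤ max r 1 := le_max_left _ _
  have hSsub : ∀ r r' : ℝ, 0 < r → ((r ≤ r' ∧ r' ≤ 1) ∨ (1 ≤ r' ∧ r' ≤ r)) →
      S r ⊆ S r' := by
    intro r r' hr h c hc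
    exact ⟨hc.1, fun x hx hWx p hp => hc.2 x hx (hband r r' hr h hWx) p hp⟩
  have hρmono : ∀ r r' : ℝ, 0 < r → r ≤ r' → r' ≤ 1 → ρ r ≤ ρ r' := by
    intro r r' hr h1 h2
    exact csSup_le_csSup (hSbdd r' (lt_of_lt_of_le hr h1)) (hSne r hr)
      (hSsub r r' hr (Or.inl ⟨h1, h2⟩))
  have hρanti : ∀ r r' : ℝ, 1 ≤ r → r ≤ r' → ρ r' ≤ ρ r := by
    intro r r' h1 h2
    have hr : (0:ℝ) < r := lt_of_lt_of_le one_pos h1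
    exact csSup_le_csSup (hSbdd r hr) (hSne r' (lt_of_lt_of_le hr h2))
      (hSsub r' r (lt_of_lt_of_le hr h2) (Or.inr ⟨h1, h2⟩))
  -- the monotone minorant data
  set g : ℝ → ℝ := fun s => if s ≤ 0 then 0 else (min (ρ (min s 1)) (ρ (min s 1)⁻¹)) / 2
    with hgdef
  have hgval : ∀ s : ℝ, 0 < s → g s = (min (ρ (min s 1)) (ρ (min s 1)⁻¹)) / 2 := by
    intro s hs; simp [hgdef, not_le.mpr hs]
  have hmin_pos : ∀ s : ℝ, 0 < s → 0 < min s 1 := fun s hs => lt_min hs one_pos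
  have hinv_ge : ∀ s : ℝ, 0 < s → (1:ℝ) ≤ (min s 1)⁻¹ := by
    intro s hs
    exact (one_le_inv₀ (hmin_pos s hs)).mpr (min_le_right s 1)
  have hgpos : ∀ s : ℝ, 0 < s → 0 < g s := by
    intro s hs
    rw [hgval s hs]
    have h1 := hρpos _ (hmin_pos s hs)
    have h2 := hρpos ((min s 1)⁻¹) (lt_of_lt_of_le one_pos (hinv_ge s hs))
    positivity
  have hg0 : ∀ s, 0 ≤ g s := by
    intro s
    rcases le_or_gt s 0 with h | h
    · simp [hgdef, h]
    · exact (hgpos s h).le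
  have hgmono : Monotone g := by
    intro s s' hss
    rcases le_or_gt s 0 with hs | hs
    · rw [show g s = 0 by simp [hgdef, hs]]
      exact hg0 s'
    · have hs' : 0 < s' := lt_of_lt_of_le hs hss
      rw [hgval s hs, hgval s' hs']
      have hu : 0 < min s 1 := hmin_pos s hs
      have hu' : 0 < min s' 1 := hmin_pos s' hs'
      have huu' : min s 1 ≤ min s' 1 := min_le_min hss le_rfl
      have h1 : ρ (min s 1) ≤ ρ (min s' 1) := hρmono _ _ hu huu' (min_le_right _ _)
      have h2 : ρ ((min s 1)⁻¹) ≤ ρ ((min s' 1)⁻¹) := by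
        apply hρanti _ _ (hinv_ge s' hs')
        exact inv_anti₀ hu huu'
      have := min_le_min h1 h2
      linarith
  have hgbound : ∀ r : ℝ, 0 < r → g (min r r⁻¹) ≤ ρ r / 2 := by
    intro r hr
    rcases le_total r 1 with h1 | h1
    · have hrinv : (1:ℝ) ≤ r⁻¹ := (one_le_inv₀ hr).mpr h1
      have hmin : min r r⁻¹ = r := min_eq_left (h1.trans hrinv)
      rw [hmin, hgval r hr]
      have : min r 1 = r := min_eq_left h1
      rw [this]
      have := min_le_left (ρ r) (ρ r⁻¹)
      linarith
    · have hrinv : r⁻¹ ≤ 1 := inv_le_one_of_one_le₀ h1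
      have hinvpos : 0 < r⁻¹ := inv_pos.mpr hr
      have hmin : min r r⁻¹ = r⁻¹ := min_eq_right (hrinv.trans h1)
      rw [hmin, hgval _ hinvpos]
      have h2 : min r⁻¹ 1 = r⁻¹ := min_eq_left hrinv
      rw [h2, inv_inv]
      have := min_le_right (ρ r⁻¹) (ρ r)
      linarith
  -- define N
  refine ⟨fun r => Mfun g (min r r⁻¹), ?_, ?_, ?_, ?_, ?_⟩
  · -- continuity
    have hc1 : ContinuousOn (fun r : ℝ => min r r⁻¹) (Set.Ioi 0) := by
      intro x hx
      exact (continuousWithinAt_id.min (continuousWithinAt_id.inv₀ (ne_of_gt hx)))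
    exact ((Mfun_lip g hg0).continuous).comp_continuousOn hc1
  · -- range
    intro r hr
    have hu : 0 < min r r⁻¹ := lt_min hr (inv_pos.mpr hr)
    constructor
    · exact Mfun_pos g hg0 hgmono hu (hgpos _ (by linarith))
    · have h1 : Mfun g (min r r⁻¹) ≤ g (min r r⁻¹) := Mfun_le g hg0 hu
      have h2 := hgbound r hr
      have h3 := hρle1 r hr
      linarith
  · -- monotone on Ioc 0 1
    intro a ha b hb hab
    have ha' : min a a⁻¹ = a := min_eq_left (ha.2.trans ((one_le_inv₀ ha.1).mpr ha.2))
    have hb' : min b b⁻¹ = b := min_eq_left (hb.2.trans ((one_le_inv₀ hb.1).mpr hb.2))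
    show Mfun g (min a a⁻¹) ≤ Mfun g (min b b⁻¹)
    rw [ha', hb']
    exact Mfun_mono g hg0 hab
  · -- antitone on Ici 1
    intro a ha b hb hab
    have ha0 : (0:ℝ) < a := lt_of_lt_of_le one_pos ha
    have hb0 : (0:ℝ) < b := lt_of_lt_of_le one_pos hb
    have ha' : min a a⁻¹ = a⁻¹ := min_eq_right ((inv_le_one_of_one_le₀ ha).trans ha)
    have hb' : min b b⁻¹ = b⁻¹ := min_eq_right ((inv_le_one_of_one_le₀ hb).trans hb)
    show Mfun g (min b b⁻¹) ≤ Mfun g (min a a⁻¹)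
    rw [ha', hb']
    exact Mfun_mono g hg0 (inv_anti₀ ha0 hab)
  · -- the decrease property
    intro x hx p hp
    have hr : 0 < W x := hWpos x hx
    have hu : 0 < min (W x) (W x)⁻¹ := lt_min hr (inv_pos.mpr hr)
    have hNle : Mfun g (min (W x) (W x)⁻¹) ≤ ρ (W x) / 2 :=
      (Mfun_le g hg0 hu).trans (hgbound (W x) hr)
    have hNlt : Mfun g (min (W x) (W x)⁻¹) < ρ (W x) := by
      have := hρpos (W x) hr
      linarith
    obtain ⟨c, hcS, hNc⟩ := exists_lt_of_lt_csSup (hSne (W x) hr) hNlt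
    obtain ⟨q, hq𝕌, hcq, hqlt⟩ := hcS.2 x hx
      ⟨min_le_left _ _, le_max_left _ _⟩ p hp
    exact ⟨q, hq𝕌, hNc.le.trans hcq, hqlt⟩
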